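/- Let p, q ∈ {1,...,n} and let S ⊆ M_n(F) be such that the non-unital subalgebra generated by M_{p×q} ∪ S equals M_n(F). Then there exists T ⊆ S with |T| ≤ 2n − p − q such that the non-unital subalgebra generated by M_{p×q} ∪ T equals M_n(F). -/

import Mathlib

open Matrix Module

/-- The set of `n × n` matrices supported in the upper-left `p × q` block (`M_{p×q}`). -/
def blockSet (F : Type*) [Field F] (n p q : ℕ) : Set (Matrix (Fin n) (Fin n) F) :=
  {m | ∀ i j : Fin n, (p ≤ i.val ∨ q ≤ j.val) → m i j = 0}

namespace Stmt8Aux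

variable {F : Type*} [Field F] {n : ℕ}

/-- Span of the first `p` standard basis vectors. -/
def Espan (F : Type*) [Field F] (n p : ℕ) : Submodule F (Fin n → F) :=
  Submodule.span F {v | ∃ i : Fin n, i.val < p ∧ v = Pi.single i 1}

/-- Smallest submodule containing `Espan` and invariant under `φ t`, `t ∈ T`. -/
def reach (p : ℕ) (φ : Matrix (Fin n) (Fin n) F → ((Fin n → F) →ₗ[F] (Fin n → F)))
    (T : Set (Matrix (Fin n) (Fin n) F)) : Submodule F (Fin n → F) :=
  sInf {V | Espan F n p ≤ V ∧ ∀ t ∈ T, V.map (φ t) ≤ V}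

variable {p q : ℕ} {φ : Matrix (Fin n) (Fin n) F → ((Fin n → F) →ₗ[F] (Fin n → F))}
  {T S : Set (Matrix (Fin n) (Fin n) F)}

lemma Espan_le_reach : Espan F n p ≤ reach p φ T := le_sInf fun _ hV => hV.1

lemma reach_inv {t : Matrix (Fin n) (Fin n) F} (ht : t ∈ T) :
    (reach p φ T).map (φ t) ≤ reach p φ T :=
  le_sInf fun V hV => (Submodule.map_mono (sInf_le hV)).trans (hV.2 t ht)

lemma reach_mono (h : T ⊆ S) : reach p φ T ≤ reach p φ S :=
  sInf_le_sInf fun V hV => ⟨hV.1, fun t ht => hV.2 t (h ht)⟩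

lemma reach_le {V : Submodule F (Fin n → F)} (h1 : Espan F n p ≤ V)
    (h2 : ∀ t ∈ T, V.map (φ t) ≤ V) : reach p φ T ≤ V :=
  sInf_le ⟨h1, h2⟩

lemma p_le_finrank_reach (hpn : p ≤ n) : p ≤ finrank F (reach p φ T : Submodule F (Fin n → F)) := by
  have hb : ⇑(Pi.basisFun F (Fin n)) = fun i => (Pi.single i 1 : Fin n → F) :=
    funext (Pi.basisFun_apply F (Fin n))
  have li : LinearIndependent F (fun i : Fin p => (Pi.single (Fin.castLE hpn i) 1 : Fin n → F)) := by
    have := ((Pi.basisFun F (Fin n)).linearIndependent).comp _ (Fin.castLE_injective hpn)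
    rwa [hb] at this
  have hmem : ∀ i : Fin p, (Pi.single (Fin.castLE hpn i) 1 : Fin n → F) ∈ reach p φ T := fun i =>
    Espan_le_reach (Submodule.subset_span ⟨Fin.castLE hpn i, i.isLt, rfl⟩)
  have li' : LinearIndependent F (fun i : Fin p =>
      (⟨(Pi.single (Fin.castLE hpn i) 1 : Fin n → F), hmem i⟩ : reach p φ T)) :=
    LinearIndependent.of_comp (reach p φ T).subtype (by exact li)
  simpa using li'.fintype_card_le_finrank

lemma greedy (hS : reach p φ S = ⊤) :
    ∀ (k : ℕ) (T : Set (Matrix (Fin n) (Fin n) F)), T ⊆ S → T.Finite →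
      n ≤ finrank F (reach p φ T : Submodule F (Fin n → F)) + k →
      ∃ T', T' ⊆ S ∧ T'.Finite ∧ T'.ncard ≤ T.ncard + k ∧ reach p φ T' = ⊤ := by
  intro k
  induction k with
  | zero =>
    intro T hTS hTf hk
    refine ⟨T, hTS, hTf, by simp, ?_⟩
    apply Submodule.eq_top_of_finrank_eq
    have h1 : finrank F (reach p φ T : Submodule F (Fin n → F)) ≤ finrank F (Fin n → F) :=
      Submodule.finrank_le _
    rw [Module.finrank_fin_fun] at *
    omega
  | succ k ih =>
    intro T hTS hTf hk
    by_cases htop : reach p φ T = ⊤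
    · exact ⟨T, hTS, hTf, le_add_right le_rfl, htop⟩
    · have hex : ∃ t ∈ S, ¬ (reach p φ T).map (φ t) ≤ reach p φ T := by
        by_contra hc
        push_neg at hc
        exact htop (top_le_iff.mp (hS ▸ reach_le Espan_le_reach hc))
      obtain ⟨t, htS, hnot⟩ := hex
      have hlt : reach p φ T < reach p φ (insert t T) := by
        refine lt_of_le_of_ne (reach_mono (Set.subset_insert t T)) fun heq => hnot ?_
        rw [heq]
        exact reach_inv (Set.mem_insert t T)
      have hfr : finrank F (reach p φ T : Submodule F (Fin n → F)) <
          finrank F (reach p φ (insert t T) : Submodule F (Fin n → F)) :=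
        Submodule.finrank_lt_finrank_of_lt hlt
      obtain ⟨T', hT'S, hT'f, hcard, htop'⟩ :=
        ih (insert t T) (Set.insert_subset htS hTS) (hTf.insert t) (by omega)
      exact ⟨T', hT'S, hT'f,
        hcard.trans (by have := Set.ncard_insert_le t T; omega), htop'⟩

lemma mem_Espan {w : Fin n → F} (hw : ∀ i : Fin n, p ≤ i.val → w i = 0) :
    w ∈ Espan F n p := by
  rw [← Finset.univ_sum_single w]
  refine Submodule.sum_mem _ fun i _ => ?_
  by_cases hi : i.val < p
  · have : Pi.single i (w i) = w i • (Pi.single i 1 : Fin n → F) := by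
      rw [← Pi.single_smul, smul_eq_mul, mul_one]
    rw [this]
    exact Submodule.smul_mem _ _ (Submodule.subset_span ⟨i, hi, rfl⟩)
  · rw [hw i (le_of_not_gt hi), Pi.single_zero]
    exact Submodule.zero_mem _

/-- Matrices preserving a submodule under `mulVec`, as a non-unital subalgebra. -/
def colSub (W : Submodule F (Fin n → F)) : NonUnitalSubalgebra F (Matrix (Fin n) (Fin n) F) where
  carrier := {x | ∀ v ∈ W, x *ᵥ v ∈ W}
  add_mem' := fun ha hb v hv => by
    rw [add_mulVec]; exact W.add_mem (ha v hv) (hb v hv)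
  zero_mem' := fun v hv => by rw [zero_mulVec]; exact W.zero_mem
  mul_mem' := fun ha hb v hv => by rw [← mulVec_mulVec]; exact ha _ (hb v hv)
  smul_mem' := fun c a ha v hv => by rw [smul_mulVec]; exact W.smul_mem c (ha v hv)

/-- Matrices whose transpose preserves a submodule under `mulVec`. -/
def rowSub (W : Submodule F (Fin n → F)) : NonUnitalSubalgebra F (Matrix (Fin n) (Fin n) F) where
  carrier := {x | ∀ v ∈ W, xᵀ *ᵥ v ∈ W}
  add_mem' := fun ha hb v hv => by
    rw [transpose_add, add_mulVec]; exact W.add_mem (ha v hv) (hb v hv)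
  zero_mem' := fun v hv => by rw [transpose_zero, zero_mulVec]; exact W.zero_mem
  mul_mem' := fun ha hb v hv => by
    rw [transpose_mul, ← mulVec_mulVec]; exact hb _ (ha v hv)
  smul_mem' := fun c a ha v hv => by
    rw [transpose_smul, smul_mulVec]; exact W.smul_mem c (ha v hv)

lemma block_mulVec {b : Matrix (Fin n) (Fin n) F} (hb : b ∈ blockSet F n p q)
    (v : Fin n → F) : b *ᵥ v ∈ Espan F n p := by
  refine mem_Espan fun i hi => ?_
  simp only [mulVec, dotProduct]
  exact Finset.sum_eq_zero fun j _ => by rw [hb i j (Or.inl hi), zero_mul]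

lemma blockT_mulVec {b : Matrix (Fin n) (Fin n) F} (hb : b ∈ blockSet F n p q)
    (v : Fin n → F) : bᵀ *ᵥ v ∈ Espan F n q := by
  refine mem_Espan fun i hi => ?_
  simp only [mulVec, dotProduct, transpose_apply]
  exact Finset.sum_eq_zero fun j _ => by rw [hb j i (Or.inr hi), zero_mul]

lemma forward_col (hp : 1 ≤ p) (hpn : p ≤ n) (hS : NonUnitalAlgebra.adjoin F (blockSet F n p q ∪ S) = ⊤) :
    reach p Matrix.mulVecLin S = ⊤ := by
  have hn : 0 < n := lt_of_lt_of_le hp hpn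
  set W := reach p (Matrix.mulVecLin : Matrix (Fin n) (Fin n) F → _) S with hW
  have hsub : NonUnitalAlgebra.adjoin F (blockSet F n p q ∪ S) ≤ colSub W := by
    apply NonUnitalAlgebra.adjoin_le
    rintro x (hx | hx)
    · exact fun v _ => Espan_le_reach (block_mulVec hx v)
    · intro v hv
      have := reach_inv (φ := Matrix.mulVecLin) hx (Submodule.mem_map_of_mem hv)
      rwa [mulVecLin_apply] at this
  have hall : ∀ x : Matrix (Fin n) (Fin n) F, ∀ v ∈ W, x *ᵥ v ∈ W := fun x =>
    hsub (hS ▸ trivial : x ∈ NonUnitalAlgebra.adjoin F (blockSet F n p q ∪ S))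
  have he0 : Pi.single (⟨0, hn⟩ : Fin n) (1 : F) ∈ W :=
    Espan_le_reach (Submodule.subset_span ⟨⟨0, hn⟩, hp, rfl⟩)
  rw [Submodule.eq_top_iff']
  intro v
  have := hall (Matrix.of fun i j => if j = ⟨0, hn⟩ then v i else 0) _ he0
  have hxe : (Matrix.of fun i j => if j = (⟨0, hn⟩ : Fin n) then v i else 0) *ᵥ
      Pi.single (⟨0, hn⟩ : Fin n) (1 : F) = v := by
    rw [mulVec_single]
    funext i
    simp
  rwa [hxe] at this

lemma forward_row (hp : 1 ≤ p) (hpn : p ≤ n) (hq : 1 ≤ q) (hS : NonUnitalAlgebra.adjoin F (blockSet F n p q ∪ S) = ⊤) :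
    reach q (fun t : Matrix (Fin n) (Fin n) F => tᵀ.mulVecLin) S = ⊤ := by
  have hn : 0 < n := lt_of_lt_of_le hp hpn
  set W := reach q (fun t : Matrix (Fin n) (Fin n) F => tᵀ.mulVecLin) S with hW
  have hsub : NonUnitalAlgebra.adjoin F (blockSet F n p q ∪ S) ≤ rowSub W := by
    apply NonUnitalAlgebra.adjoin_le
    rintro x (hx | hx)
    · exact fun v _ => Espan_le_reach (blockT_mulVec hx v)
    · intro v hv
      have := reach_inv (φ := fun t : Matrix (Fin n) (Fin n) F => tᵀ.mulVecLin) hx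
        (Submodule.mem_map_of_mem hv)
      rwa [mulVecLin_apply] at this
  have hall : ∀ x : Matrix (Fin n) (Fin n) F, ∀ v ∈ W, xᵀ *ᵥ v ∈ W := fun x =>
    hsub (hS ▸ trivial : x ∈ NonUnitalAlgebra.adjoin F (blockSet F n p q ∪ S))
  have he0 : Pi.single (⟨0, hn⟩ : Fin n) (1 : F) ∈ W :=
    Espan_le_reach (Submodule.subset_span ⟨⟨0, hn⟩, hq, rfl⟩)
  rw [Submodule.eq_top_iff']
  intro v
  have := hall (Matrix.of fun i j => if i = ⟨0, hn⟩ then v j else 0) _ he0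
  have hxe : (Matrix.of fun i j => if i = (⟨0, hn⟩ : Fin n) then v j else 0)ᵀ *ᵥ
      Pi.single (⟨0, hn⟩ : Fin n) (1 : F) = v := by
    rw [mulVec_single]
    funext j
    simp [transpose_apply]
  rwa [hxe] at this

lemma std_mem_block {i j : Fin n} (hi : i.val < p) (hj : j.val < q) :
    Matrix.single i j (1 : F) ∈ blockSet F n p q := by
  intro a b hab
  simp only [Matrix.single, of_apply, ite_eq_right_iff, and_imp]
  rintro rfl rfl
  rcases hab with h | h <;> omega

lemma backward (hp : 1 ≤ p) (hpn : p ≤ n) (hq : 1 ≤ q) (hcol : reach p Matrix.mulVecLin T = ⊤)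
    (hrow : reach q (fun t : Matrix (Fin n) (Fin n) F => tᵀ.mulVecLin) T = ⊤) :
    NonUnitalAlgebra.adjoin F (blockSet F n p q ∪ T) = ⊤ := by
  have hn : 0 < n := lt_of_lt_of_le hp hpn
  set z : Fin n := ⟨0, hn⟩ with hz
  set A := NonUnitalAlgebra.adjoin F (blockSet F n p q ∪ T) with hA
  -- every vector is x *ᵥ e_z for some x ∈ A
  have hV₁ : ∀ v : Fin n → F, ∃ x ∈ A, x *ᵥ Pi.single z (1 : F) = v := by
    have : reach p Matrix.mulVecLin T ≤
        { carrier := {v | ∃ x ∈ A, x *ᵥ Pi.single z (1 : F) = v}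
          add_mem' := by
            rintro a b ⟨x, hx, rfl⟩ ⟨y, hy, rfl⟩
            exact ⟨x + y, add_mem hx hy, by rw [add_mulVec]⟩
          zero_mem' := ⟨0, zero_mem A, by rw [zero_mulVec]⟩
          smul_mem' := by
            rintro c a ⟨x, hx, rfl⟩
            exact ⟨c • x, SMulMemClass.smul_mem c hx, by rw [smul_mulVec]⟩ } := by
      apply reach_le
      · rw [Espan, Submodule.span_le]
        rintro v ⟨i, hi, rfl⟩
        refine ⟨Matrix.single i z 1,
          NonUnitalAlgebra.subset_adjoin F (Or.inl (std_mem_block hi hq)), ?_⟩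
        rw [mulVec_single]
        funext k
        by_cases hk : k = i
        · simp [Matrix.single, hk, Pi.single_apply]
        · simp [Matrix.single, hk, Pi.single_apply, Ne.symm hk]
      · rintro t ht v ⟨w, ⟨x, hx, rfl⟩, rfl⟩
        exact ⟨t * x, mul_mem (NonUnitalAlgebra.subset_adjoin F (Or.inr ht)) hx, by
          rw [mulVecLin_apply, mulVec_mulVec]⟩
    intro v
    exact this (hcol ▸ trivial)
  have hV₂ : ∀ v : Fin n → F, ∃ y ∈ A, yᵀ *ᵥ Pi.single z (1 : F) = v := by
    have : reach q (fun t : Matrix (Fin n) (Fin n) F => tᵀ.mulVecLin) T ≤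
        { carrier := {v | ∃ y ∈ A, yᵀ *ᵥ Pi.single z (1 : F) = v}
          add_mem' := by
            rintro a b ⟨x, hx, rfl⟩ ⟨y, hy, rfl⟩
            exact ⟨x + y, add_mem hx hy, by rw [transpose_add, add_mulVec]⟩
          zero_mem' := ⟨0, zero_mem A, by rw [transpose_zero, zero_mulVec]⟩
          smul_mem' := by
            rintro c a ⟨x, hx, rfl⟩
            exact ⟨c • x, SMulMemClass.smul_mem c hx, by rw [transpose_smul, smul_mulVec]⟩ } := by
      apply reach_le
      · rw [Espan, Submodule.span_le]
        rintro v ⟨j, hj, rfl⟩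
        refine ⟨Matrix.single z j 1,
          NonUnitalAlgebra.subset_adjoin F (Or.inl (std_mem_block hp hj)), ?_⟩
        rw [mulVec_single]
        funext k
        by_cases hk : k = j
        · simp [Matrix.single, transpose_apply, hk, Pi.single_apply]
        · simp [Matrix.single, transpose_apply, hk, Pi.single_apply, Ne.symm hk]
      · rintro t ht v ⟨w, ⟨x, hx, rfl⟩, rfl⟩
        refine ⟨x * t, mul_mem hx (NonUnitalAlgebra.subset_adjoin F (Or.inr ht)), by
          rw [mulVecLin_apply, mulVec_mulVec, ← transpose_mul]⟩
    intro v
    exact this (hrow ▸ trivial)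
  -- all stdBasisMatrices lie in A
  have hstd : ∀ i j : Fin n, Matrix.single i j (1 : F) ∈ A := by
    intro i j
    obtain ⟨x, hx, hxe⟩ := hV₁ (Pi.single i (1 : F))
    obtain ⟨y, hy, hye⟩ := hV₂ (Pi.single j (1 : F))
    have hE : x * Matrix.single z z (1 : F) * y = Matrix.single i j (1 : F) := by
      have h1 : ∀ a, x a z = (Pi.single i 1 : Fin n → F) a := fun a => by
        rw [← hxe]; simp [mulVec_single]
      have h2 : ∀ b, y z b = (Pi.single j 1 : Fin n → F) b := fun b => by
        rw [← hye]; simp [mulVec_single, transpose_apply]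
      funext a b
      have key : (x * Matrix.single z z (1 : F) * y) a b = x a z * y z b := by
        rw [mul_assoc, Matrix.mul_apply]
        rw [Finset.sum_eq_single z (fun c _ hc => by
          rw [Matrix.single_mul_apply_of_ne (1 : F) z z c b hc, mul_zero]) (by simp)]
        rw [Matrix.single_mul_apply_same, one_mul]
      rw [key, h1 a, h2 b]
      by_cases ha : a = i
      · by_cases hb : b = j
        · simp [Matrix.single, Pi.single_apply, ha, hb]
        · simp [Matrix.single, Pi.single_apply, ha, hb, Ne.symm hb]
      · by_cases hb : b = j
        · simp [Matrix.single, Pi.single_apply, ha, hb, Ne.symm ha]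
        · simp [Matrix.single, Pi.single_apply, ha, hb, Ne.symm ha, Ne.symm hb]
    rw [← hE]
    exact mul_mem (mul_mem hx
      (NonUnitalAlgebra.subset_adjoin F (Or.inl (std_mem_block hp hq)))) hy
  rw [NonUnitalAlgebra.eq_top_iff]
  intro m
  rw [matrix_eq_sum_single m]
  refine sum_mem fun i _ => sum_mem fun j _ => ?_
  have : Matrix.single i j (m i j) = m i j • Matrix.single i j (1 : F) := by
    rw [smul_single, smul_eq_mul, mul_one]
  rw [this]
  exact SMulMemClass.smul_mem _ (hstd i j)

end Stmt8Aux

theorem stmt_8 (F : Type*) [Field F] (n p q : ℕ)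
    (hp : 1 ≤ p) (hpn : p ≤ n) (hq : 1 ≤ q) (hqn : q ≤ n)
    (S : Set (Matrix (Fin n) (Fin n) F))
    (hS : NonUnitalAlgebra.adjoin F (blockSet F n p q ∪ S) = ⊤) :
    ∃ T ⊆ S, T.Finite ∧ T.ncard ≤ 2 * n - p - q ∧
      NonUnitalAlgebra.adjoin F (blockSet F n p q ∪ T) = ⊤ := by
  classical
  obtain ⟨T₁, hT₁S, hT₁f, hT₁c, hT₁top⟩ :=
    Stmt8Aux.greedy (Stmt8Aux.forward_col hp hpn hS) (n - p) ∅ (Set.empty_subset S)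
      Set.finite_empty (by
        have := Stmt8Aux.p_le_finrank_reach (F := F) (T := (∅ : Set (Matrix (Fin n) (Fin n) F)))
          (φ := Matrix.mulVecLin) (p := p) hpn
        omega)
  obtain ⟨T₂, hT₂S, hT₂f, hT₂c, hT₂top⟩ :=
    Stmt8Aux.greedy (Stmt8Aux.forward_row hp hpn hq hS) (n - q) ∅ (Set.empty_subset S)
      Set.finite_empty (by
        have := Stmt8Aux.p_le_finrank_reach (F := F) (T := (∅ : Set (Matrix (Fin n) (Fin n) F)))
          (φ := fun t : Matrix (Fin n) (Fin n) F => tᵀ.mulVecLin) (p := q) hqn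
        omega)
  refine ⟨T₁ ∪ T₂, Set.union_subset hT₁S hT₂S, hT₁f.union hT₂f, ?_, ?_⟩
  · have := Set.ncard_union_le T₁ T₂
    rw [Set.ncard_empty] at hT₁c hT₂c
    omega
  · exact Stmt8Aux.backward hp hpn hq
      (top_le_iff.mp (hT₁top ▸ Stmt8Aux.reach_mono Set.subset_union_left))
      (top_le_iff.mp (hT₂top ▸ Stmt8Aux.reach_mono Set.subset_union_right))
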